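/- Common-ancestor inequality with bounded randomness: let $A,B,C,\lambda$ be jointly distributed discrete random variables with $A,B,C$ conditionally independent given $\lambda$ (i.e., $H(A,B,C|\lambda)=H(A|\lambda)+H(B|\lambda)+H(C|\lambda)$) and $H(\lambda)\leq\mathcal{C}$. Then $H(A,B)+H(A,C)+H(B,C)-2H(A,B,C)\leq\mathcal{C}$. -/

import Mathlib

open Finset

/-- Shannon entropy of a discrete random variable `X` on a finite probability
space with weights `p`. -/
noncomputable def shannonEntropy {Ω α : Type*} [Fintype Ω] [Fintype α] [DecidableEq α]
    (p : Ω → ℝ) (X : Ω → α) : ℝ :=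
  ∑ x : α, Real.negMulLog (∑ ω ∈ Finset.univ.filter (fun ω => X ω = x), p ω)

section helpers

variable {Ω : Type*} [Fintype Ω] (p : Ω → ℝ)

/-- probability mass of a fiber -/
noncomputable def prmass {α : Type*} [DecidableEq α] (X : Ω → α) (x : α) : ℝ :=
  ∑ ω ∈ Finset.univ.filter (fun ω => X ω = x), p ω

lemma shannonEntropy_eq {α : Type*} [Fintype α] [DecidableEq α] (X : Ω → α) :
    shannonEntropy p X = ∑ x : α, Real.negMulLog (prmass p X x) := rfl

lemma prmass_nonneg (hp : ∀ ω, 0 ≤ p ω) {α : Type*} [DecidableEq α] (X : Ω → α) (x : α) :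
    0 ≤ prmass p X x :=
  Finset.sum_nonneg fun ω _ => hp ω

lemma prmass_total {α : Type*} [Fintype α] [DecidableEq α] (X : Ω → α) :
    ∑ x : α, prmass p X x = ∑ ω, p ω :=
  Finset.sum_fiberwise _ _ _

lemma prmass_pair_fst {α β : Type*} [DecidableEq α] [Fintype β] [DecidableEq β]
    (X : Ω → α) (Y : Ω → β) (x : α) :
    ∑ y : β, prmass p (fun ω => (X ω, Y ω)) (x, y) = prmass p X x := by
  unfold prmass
  rw [← Finset.sum_fiberwise (Finset.univ.filter (fun ω => X ω = x)) Y p]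
  refine Finset.sum_congr rfl fun y _ => ?_
  rw [Finset.filter_filter]
  refine Finset.sum_congr ?_ fun _ _ => rfl
  apply Finset.filter_congr
  intro ω _
  simp only [Prod.mk.injEq]
  all_goals tauto

lemma prmass_pair_snd {α β : Type*} [Fintype α] [DecidableEq α] [DecidableEq β]
    (X : Ω → α) (Y : Ω → β) (y : β) :
    ∑ x : α, prmass p (fun ω => (X ω, Y ω)) (x, y) = prmass p Y y := by
  unfold prmass
  rw [← Finset.sum_fiberwise (Finset.univ.filter (fun ω => Y ω = y)) X p]
  refine Finset.sum_congr rfl fun x _ => ?_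
  rw [Finset.filter_filter]
  refine Finset.sum_congr ?_ fun _ _ => rfl
  apply Finset.filter_congr
  intro ω _
  simp only [Prod.mk.injEq]
  all_goals tauto

lemma prmass_triple_mid {α β γ : Type*} [DecidableEq α] [Fintype β] [DecidableEq β]
    [DecidableEq γ] (X : Ω → α) (Y : Ω → β) (Z : Ω → γ) (x : α) (z : γ) :
    ∑ y : β, prmass p (fun ω => (X ω, Y ω, Z ω)) (x, y, z) =
      prmass p (fun ω => (X ω, Z ω)) (x, z) := by
  unfold prmass
  rw [← Finset.sum_fiberwise (Finset.univ.filter (fun ω => (X ω, Z ω) = (x, z))) Y p]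
  refine Finset.sum_congr rfl fun y _ => ?_
  rw [Finset.filter_filter]
  refine Finset.sum_congr ?_ fun _ _ => rfl
  apply Finset.filter_congr
  intro ω _
  simp only [Prod.mk.injEq]
  all_goals tauto

/-- entropy is invariant under injective relabeling -/
lemma shannonEntropy_comp_inj {α β : Type*} [Fintype α] [DecidableEq α]
    [Fintype β] [DecidableEq β] (X : Ω → α) (f : α → β) (hf : Function.Injective f) :
    shannonEntropy p (fun ω => f (X ω)) = shannonEntropy p X := by
  rw [shannonEntropy_eq, shannonEntropy_eq]
  rw [← Finset.sum_subset (Finset.subset_univ (Finset.image f Finset.univ))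
    (fun y _ hy => ?_)]
  · rw [Finset.sum_image (fun a _ b _ h => hf h)]
    refine Finset.sum_congr rfl fun x _ => ?_
    congr 1
    unfold prmass
    refine Finset.sum_congr ?_ fun _ _ => rfl
    apply Finset.filter_congr
    intro ω _
    simp [hf.eq_iff]
  · have : prmass p (fun ω => f (X ω)) y = 0 := by
      unfold prmass
      rw [Finset.filter_false_of_mem, Finset.sum_empty]
      intro ω _ h
      exact hy (h ▸ Finset.mem_image_of_mem f (Finset.mem_univ (X ω)))
    rw [this, Real.negMulLog_zero]

/-- Pointwise Gibbs inequality. -/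
lemma gibbs_point {a b : ℝ} (ha : 0 ≤ a) (hb : 0 ≤ b) (h : b = 0 → a = 0) :
    a - b ≤ a * Real.log a - a * Real.log b := by
  rcases eq_or_lt_of_le ha with rfl | ha'
  · simpa using hb
  · have hb' : 0 < b := by
      rcases eq_or_lt_of_le hb with rfl | h'
      · exact absurd (h rfl) (ne_of_gt ha')
      · exact h'
    have hba : 0 < b / a := div_pos hb' ha'
    have := Real.log_le_sub_one_of_pos hba
    rw [Real.log_div (ne_of_gt hb') (ne_of_gt ha')] at this
    have h2 : a * (Real.log b - Real.log a) ≤ a * (b / a - 1) :=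
      mul_le_mul_of_nonneg_left this ha
    have h3 : a * (b / a - 1) = b - a := by field_simp
    nlinarith [h2]

end helpers

section main

variable {Ω : Type*} [Fintype Ω] (p : Ω → ℝ)

lemma mul_log_le_of_le {a c : ℝ} (ha : 0 ≤ a) (hac : a ≤ c) :
    a * Real.log a ≤ a * Real.log c := by
  rcases eq_or_lt_of_le ha with rfl | ha'
  · simp
  · exact mul_le_mul_of_nonneg_left (Real.log_le_log ha' hac) ha

/-- Monotonicity: `H(X) ≤ H(X,Y)`. -/
lemma shannonEntropy_mono {α β : Type*} [Fintype α] [DecidableEq α] [Fintype β] [DecidableEq β]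
    (hp : ∀ ω, 0 ≤ p ω) (X : Ω → α) (Y : Ω → β) :
    shannonEntropy p X ≤ shannonEntropy p (fun ω => (X ω, Y ω)) := by
  rw [shannonEntropy_eq, shannonEntropy_eq, Fintype.sum_prod_type]
  refine Finset.sum_le_sum fun x _ => ?_
  have hfst := prmass_pair_fst p X Y x
  calc Real.negMulLog (prmass p X x)
      = ∑ y, -(prmass p (fun ω => (X ω, Y ω)) (x, y) * Real.log (prmass p X x)) := by
        rw [Real.negMulLog, neg_mul, Finset.sum_neg_distrib, ← Finset.sum_mul, hfst]
    _ ≤ ∑ y, Real.negMulLog (prmass p (fun ω => (X ω, Y ω)) (x, y)) := by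
        refine Finset.sum_le_sum fun y _ => ?_
        rw [Real.negMulLog, neg_mul, neg_le_neg_iff]
        refine mul_log_le_of_le (prmass_nonneg p hp _ _) ?_
        rw [← hfst]
        exact Finset.single_le_sum (fun y _ => prmass_nonneg p hp _ _) (Finset.mem_univ y)

/-- Submodularity: `H(X,Y,Z) + H(Z) ≤ H(X,Z) + H(Y,Z)`. -/
lemma shannonEntropy_submod {α β γ : Type*} [Fintype α] [DecidableEq α] [Fintype β]
    [DecidableEq β] [Fintype γ] [DecidableEq γ]
    (hp : ∀ ω, 0 ≤ p ω) (hsum : ∑ ω, p ω = 1) (X : Ω → α) (Y : Ω → β) (Z : Ω → γ) :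
    shannonEntropy p (fun ω => (X ω, Y ω, Z ω)) + shannonEntropy p Z ≤
      shannonEntropy p (fun ω => (X ω, Z ω)) + shannonEntropy p (fun ω => (Y ω, Z ω)) := by
  classical
  set q : α → β → γ → ℝ := fun x y z => prmass p (fun ω => (X ω, Y ω, Z ω)) (x, y, z) with hqdef
  set pxz : α → γ → ℝ := fun x z => prmass p (fun ω => (X ω, Z ω)) (x, z) with hpxzdef
  set pyz : β → γ → ℝ := fun y z => prmass p (fun ω => (Y ω, Z ω)) (y, z) with hpyzdef
  set pz : γ → ℝ := fun z => prmass p Z z with hpzdef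
  have hq0 : ∀ x y z, 0 ≤ q x y z := fun x y z => prmass_nonneg p hp _ _
  have hpxz0 : ∀ x z, 0 ≤ pxz x z := fun x z => prmass_nonneg p hp _ _
  have hpyz0 : ∀ y z, 0 ≤ pyz y z := fun y z => prmass_nonneg p hp _ _
  have hpz0 : ∀ z, 0 ≤ pz z := fun z => prmass_nonneg p hp _ _
  have m1 : ∀ x z, ∑ y, q x y z = pxz x z := fun x z => prmass_triple_mid p X Y Z x z
  have m2 : ∀ y z, ∑ x, q x y z = pyz y z := fun y z =>
    prmass_pair_snd p X (fun ω => (Y ω, Z ω)) (y, z)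
  have m3 : ∀ z, ∑ x, pxz x z = pz z := fun z => prmass_pair_snd p X Z z
  have m4 : ∀ z, ∑ y, pyz y z = pz z := fun z => prmass_pair_snd p Y Z z
  have hq_le_pxz : ∀ x y z, q x y z ≤ pxz x z := fun x y z => by
    rw [← m1 x z]
    exact Finset.single_le_sum (fun y _ => hq0 x y z) (Finset.mem_univ y)
  have hq_le_pyz : ∀ x y z, q x y z ≤ pyz y z := fun x y z => by
    rw [← m2 y z]
    exact Finset.single_le_sum (fun x _ => hq0 x y z) (Finset.mem_univ x)
  have hpxz_le_pz : ∀ x z, pxz x z ≤ pz z := fun x z => by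
    rw [← m3 z]
    exact Finset.single_le_sum (fun x _ => hpxz0 x z) (Finset.mem_univ x)
  set b : α → β → γ → ℝ := fun x y z => pxz x z * pyz y z / pz z with hbdef
  have hb0 : ∀ x y z, 0 ≤ b x y z := fun x y z =>
    div_nonneg (mul_nonneg (hpxz0 x z) (hpyz0 y z)) (hpz0 z)
  have hbq : ∀ x y z, b x y z = 0 → q x y z = 0 := by
    intro x y z h
    by_cases hz : pz z = 0
    · have := (hq_le_pxz x y z).trans (hpxz_le_pz x z)
      exact le_antisymm (hz ▸ this) (hq0 x y z)
    · rcases div_eq_zero_iff.mp h with h' | h'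
      · rcases mul_eq_zero.mp h' with h'' | h''
        · exact le_antisymm (h'' ▸ hq_le_pxz x y z) (hq0 x y z)
        · exact le_antisymm (h'' ▸ hq_le_pyz x y z) (hq0 x y z)
      · exact absurd h' hz
  have hsum_q : ∑ x, ∑ y, ∑ z, q x y z = 1 := by
    have := prmass_total p (fun ω => (X ω, Y ω, Z ω))
    rw [hsum] at this
    rw [← this, Fintype.sum_prod_type]
    exact Finset.sum_congr rfl fun x _ => by rw [Fintype.sum_prod_type]
  have hsum_b : ∑ x, ∑ y, ∑ z, b x y z = 1 := by
    have hzc : ∀ z, ∑ x, ∑ y, b x y z = pz z := by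
      intro z
      by_cases hz : pz z = 0
      · have hx0 : ∀ x, pxz x z = 0 := fun x =>
          le_antisymm (hz ▸ hpxz_le_pz x z) (hpxz0 x z)
        simp [hbdef, hx0, hz]
      · have : ∑ x, ∑ y, b x y z = (∑ x, pxz x z) * (∑ y, pyz y z) / pz z := by
          rw [Finset.sum_mul, Finset.sum_div]
          refine Finset.sum_congr rfl fun x _ => ?_
          rw [Finset.mul_sum, Finset.sum_div]
        rw [this, m3, m4]
        field_simp
    calc ∑ x, ∑ y, ∑ z, b x y z = ∑ x, ∑ z, ∑ y, b x y z :=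
          Finset.sum_congr rfl fun x _ => Finset.sum_comm
      _ = ∑ z, ∑ x, ∑ y, b x y z := Finset.sum_comm
      _ = ∑ z, pz z := Finset.sum_congr rfl fun z _ => hzc z
      _ = 1 := by rw [hpzdef]; rw [prmass_total p Z, hsum]
  -- the Gibbs inequality summed over all points
  have key : 0 ≤ ∑ x, ∑ y, ∑ z, (q x y z * Real.log (q x y z) - q x y z * Real.log (b x y z)) := by
    have h1 : ∑ x, ∑ y, ∑ z, (q x y z - b x y z) ≤
        ∑ x, ∑ y, ∑ z, (q x y z * Real.log (q x y z) - q x y z * Real.log (b x y z)) := by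
      refine Finset.sum_le_sum fun x _ => Finset.sum_le_sum fun y _ =>
        Finset.sum_le_sum fun z _ => ?_
      exact gibbs_point (hq0 x y z) (hb0 x y z) (hbq x y z)
    have h2 : ∑ x, ∑ y, ∑ z, (q x y z - b x y z) = 0 := by
      simp only [Finset.sum_sub_distrib]
      rw [hsum_q, hsum_b]; ring
    linarith
  -- split the log of b
  have hlogb : ∀ x y z, q x y z * Real.log (b x y z) =
      q x y z * Real.log (pxz x z) + q x y z * Real.log (pyz y z)
        - q x y z * Real.log (pz z) := by
    intro x y z
    by_cases hq : q x y z = 0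
    · simp [hq]
    · have hqpos : 0 < q x y z := lt_of_le_of_ne (hq0 x y z) (Ne.symm hq)
      have h1 : 0 < pxz x z := lt_of_lt_of_le hqpos (hq_le_pxz x y z)
      have h2 : 0 < pyz y z := lt_of_lt_of_le hqpos (hq_le_pyz x y z)
      have h3 : 0 < pz z := lt_of_lt_of_le h1 (hpxz_le_pz x z)
      rw [hbdef]
      rw [Real.log_div (mul_ne_zero (ne_of_gt h1) (ne_of_gt h2)) (ne_of_gt h3),
        Real.log_mul (ne_of_gt h1) (ne_of_gt h2)]
      ring
  -- identify the four sums with entropies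
  have E1 : shannonEntropy p (fun ω => (X ω, Y ω, Z ω)) =
      -∑ x, ∑ y, ∑ z, q x y z * Real.log (q x y z) := by
    simp only [shannonEntropy_eq, Fintype.sum_prod_type, Real.negMulLog, neg_mul,
      Finset.sum_neg_distrib]
    rfl
  have HXZ : shannonEntropy p (fun ω => (X ω, Z ω)) =
      -∑ x, ∑ z, pxz x z * Real.log (pxz x z) := by
    simp only [shannonEntropy_eq, Fintype.sum_prod_type, Real.negMulLog, neg_mul,
      Finset.sum_neg_distrib]
    rfl
  have HYZ : shannonEntropy p (fun ω => (Y ω, Z ω)) =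
      -∑ y, ∑ z, pyz y z * Real.log (pyz y z) := by
    simp only [shannonEntropy_eq, Fintype.sum_prod_type, Real.negMulLog, neg_mul,
      Finset.sum_neg_distrib]
    rfl
  have HZ : shannonEntropy p Z = -∑ z, pz z * Real.log (pz z) := by
    simp only [shannonEntropy_eq, Real.negMulLog, neg_mul, Finset.sum_neg_distrib]
    rfl
  have E2 : ∑ x, ∑ y, ∑ z, q x y z * Real.log (pxz x z) =
      ∑ x, ∑ z, pxz x z * Real.log (pxz x z) := by
    refine Finset.sum_congr rfl fun x _ => ?_
    rw [Finset.sum_comm]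
    refine Finset.sum_congr rfl fun z _ => ?_
    rw [← Finset.sum_mul, m1]
  have E3 : ∑ x, ∑ y, ∑ z, q x y z * Real.log (pyz y z) =
      ∑ y, ∑ z, pyz y z * Real.log (pyz y z) := by
    calc ∑ x, ∑ y, ∑ z, q x y z * Real.log (pyz y z)
        = ∑ y, ∑ x, ∑ z, q x y z * Real.log (pyz y z) := Finset.sum_comm
      _ = ∑ y, ∑ z, pyz y z * Real.log (pyz y z) := by
          refine Finset.sum_congr rfl fun y _ => ?_
          rw [Finset.sum_comm]
          refine Finset.sum_congr rfl fun z _ => ?_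
          rw [← Finset.sum_mul, m2]
  have E4 : ∑ x, ∑ y, ∑ z, q x y z * Real.log (pz z) = ∑ z, pz z * Real.log (pz z) := by
    calc ∑ x, ∑ y, ∑ z, q x y z * Real.log (pz z)
        = ∑ x, ∑ z, pxz x z * Real.log (pz z) := by
          refine Finset.sum_congr rfl fun x _ => ?_
          rw [Finset.sum_comm]
          refine Finset.sum_congr rfl fun z _ => ?_
          rw [← Finset.sum_mul, m1]
      _ = ∑ z, ∑ x, pxz x z * Real.log (pz z) := Finset.sum_comm
      _ = ∑ z, pz z * Real.log (pz z) := by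
          refine Finset.sum_congr rfl fun z _ => ?_
          rw [← Finset.sum_mul, m3]
  have hsplit : ∑ x, ∑ y, ∑ z, q x y z * Real.log (b x y z) =
      (∑ x, ∑ z, pxz x z * Real.log (pxz x z)) +
      (∑ y, ∑ z, pyz y z * Real.log (pyz y z)) - ∑ z, pz z * Real.log (pz z) := by
    calc ∑ x, ∑ y, ∑ z, q x y z * Real.log (b x y z)
        = ∑ x, ∑ y, ∑ z, (q x y z * Real.log (pxz x z) + q x y z * Real.log (pyz y z)
            - q x y z * Real.log (pz z)) :=
          Finset.sum_congr rfl fun x _ => Finset.sum_congr rfl fun y _ =>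
            Finset.sum_congr rfl fun z _ => hlogb x y z
      _ = _ := by
          simp only [Finset.sum_add_distrib, Finset.sum_sub_distrib]
          rw [E2, E3, E4]
  have key' : 0 ≤ (∑ x, ∑ y, ∑ z, q x y z * Real.log (q x y z)) -
      ∑ x, ∑ y, ∑ z, q x y z * Real.log (b x y z) := by
    simpa only [Finset.sum_sub_distrib] using key
  rw [E1, HXZ, HYZ, HZ]
  rw [hsplit] at key'
  linarith

end main

/-- Common-ancestor inequality with bounded randomness: if `A, B, C` are conditionally
independent given `λ` (i.e. `H(A,B,C|λ) = H(A|λ) + H(B|λ) + H(C|λ)`) and `H(λ) ≤ 𝒞`,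
then `H(A,B) + H(A,C) + H(B,C) - 2 H(A,B,C) ≤ 𝒞`. -/
theorem common_ancestor_bounded {Ω α β γ δ : Type*} [Fintype Ω]
    [Fintype α] [DecidableEq α] [Fintype β] [DecidableEq β] [Fintype γ] [DecidableEq γ]
    [Fintype δ] [DecidableEq δ]
    (p : Ω → ℝ) (hp : ∀ ω, 0 ≤ p ω) (hsum : ∑ ω, p ω = 1)
    (A : Ω → α) (B : Ω → β) (C : Ω → γ) (lam : Ω → δ) (𝒞 : ℝ)
    (hCI : shannonEntropy p (fun ω => (A ω, B ω, C ω, lam ω)) - shannonEntropy p lam =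
      (shannonEntropy p (fun ω => (A ω, lam ω)) - shannonEntropy p lam) +
      (shannonEntropy p (fun ω => (B ω, lam ω)) - shannonEntropy p lam) +
      (shannonEntropy p (fun ω => (C ω, lam ω)) - shannonEntropy p lam))
    (hlam : shannonEntropy p lam ≤ 𝒞) :
    shannonEntropy p (fun ω => (A ω, B ω)) +
      shannonEntropy p (fun ω => (A ω, C ω)) +
      shannonEntropy p (fun ω => (B ω, C ω)) -
      2 * shannonEntropy p (fun ω => (A ω, B ω, C ω)) ≤ 𝒞 := by
  -- submodularity instances
  have S1 := shannonEntropy_submod p hp hsum B C lam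
  have S2 := shannonEntropy_submod p hp hsum A B lam
  have S3 := shannonEntropy_submod p hp hsum A C lam
  have S4 := shannonEntropy_submod p hp hsum C lam (fun ω => (A ω, B ω))
  have S5 := shannonEntropy_submod p hp hsum B lam (fun ω => (A ω, C ω))
  have S6 := shannonEntropy_mono p hp (fun ω => (B ω, C ω)) lam
  -- reindexing equalities
  have eq1 : shannonEntropy p (fun ω => (C ω, lam ω, (A ω, B ω))) =
      shannonEntropy p (fun ω => (A ω, B ω, C ω, lam ω)) :=
    shannonEntropy_comp_inj p (fun ω => (A ω, B ω, C ω, lam ω))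
      (fun t => (t.2.2.1, t.2.2.2, (t.1, t.2.1)))
      (by intro ⟨a, b, c, l⟩ ⟨a', b', c', l'⟩ h
          simp only [Prod.mk.injEq] at h ⊢; tauto)
  have eq2 : shannonEntropy p (fun ω => (C ω, (A ω, B ω))) =
      shannonEntropy p (fun ω => (A ω, B ω, C ω)) :=
    shannonEntropy_comp_inj p (fun ω => (A ω, B ω, C ω))
      (fun t => (t.2.2, (t.1, t.2.1)))
      (by intro ⟨a, b, c⟩ ⟨a', b', c'⟩ h
          simp only [Prod.mk.injEq] at h ⊢; tauto)
  have eq3 : shannonEntropy p (fun ω => (lam ω, (A ω, B ω))) =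
      shannonEntropy p (fun ω => (A ω, B ω, lam ω)) :=
    shannonEntropy_comp_inj p (fun ω => (A ω, B ω, lam ω))
      (fun t => (t.2.2, (t.1, t.2.1)))
      (by intro ⟨a, b, l⟩ ⟨a', b', l'⟩ h
          simp only [Prod.mk.injEq] at h ⊢; tauto)
  have eq4 : shannonEntropy p (fun ω => (B ω, lam ω, (A ω, C ω))) =
      shannonEntropy p (fun ω => (A ω, B ω, C ω, lam ω)) :=
    shannonEntropy_comp_inj p (fun ω => (A ω, B ω, C ω, lam ω))
      (fun t => (t.2.1, t.2.2.2, (t.1, t.2.2.1)))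
      (by intro ⟨a, b, c, l⟩ ⟨a', b', c', l'⟩ h
          simp only [Prod.mk.injEq] at h ⊢; tauto)
  have eq5 : shannonEntropy p (fun ω => (B ω, (A ω, C ω))) =
      shannonEntropy p (fun ω => (A ω, B ω, C ω)) :=
    shannonEntropy_comp_inj p (fun ω => (A ω, B ω, C ω))
      (fun t => (t.2.1, (t.1, t.2.2)))
      (by intro ⟨a, b, c⟩ ⟨a', b', c'⟩ h
          simp only [Prod.mk.injEq] at h ⊢; tauto)
  have eq6 : shannonEntropy p (fun ω => (lam ω, (A ω, C ω))) =
      shannonEntropy p (fun ω => (A ω, C ω, lam ω)) :=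
    shannonEntropy_comp_inj p (fun ω => (A ω, C ω, lam ω))
      (fun t => (t.2.2, (t.1, t.2.1)))
      (by intro ⟨a, c, l⟩ ⟨a', c', l'⟩ h
          simp only [Prod.mk.injEq] at h ⊢; tauto)
  have eq7 : shannonEntropy p (fun ω => ((B ω, C ω), lam ω)) =
      shannonEntropy p (fun ω => (B ω, C ω, lam ω)) :=
    shannonEntropy_comp_inj p (fun ω => (B ω, C ω, lam ω))
      (fun t => ((t.1, t.2.1), t.2.2))
      (by intro ⟨b, c, l⟩ ⟨b', c', l'⟩ h
          simp only [Prod.mk.injEq] at h ⊢; tauto)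
  rw [eq1, eq2, eq3] at S4
  rw [eq4, eq5, eq6] at S5
  rw [eq7] at S6
  linarith
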